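/- Let n = 2k+3 and G = K_n with a fixed cycle C of length n−2 and remaining vertices s,t. Let Q = δ(s) be the set of n−1 edges incident to s. Then every edge of G is Q-expressible with respect to the C-induced constraint: starting from E_Q = Q and repeatedly adding any edge e for which some odd cycle tight for the C-induced constraint contains e and has all its other edges already in E_Q, the procedure terminates with E_Q = E. -/

import Mathlib

open SimpleGraph

def ellLen (k a b : ℕ) : ℕ :=
  if (max a b - min a b) % 2 = 1 then max a b - min a b
  else 2 * k + 1 - (max a b - min a b)

def cCoeffFun (k a b : ℕ) : ℕ :=
  if a = b then 0
  else if max a b < 2 * k + 1 then ellLen k a b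
  else if min a b < 2 * k + 1 then k
  else 1

/-- Coefficients of the `C`-induced constraint on `K_{2k+3}` (cycle vertices `0,…,2k`,
`s = 2k+1`, `t = 2k+2`), as a function on unordered edges. -/
def cCoeff (k : ℕ) : Sym2 (Fin (2 * k + 3)) → ℕ :=
  Sym2.lift ⟨fun a b => cCoeffFun k a.val b.val, fun a b => by
    simp only [cCoeffFun, ellLen, Nat.max_comm, Nat.min_comm, eq_comm]⟩

/-- `Q`-expressibility closure: starting from `E_Q = Q`, an element `e` may be added
whenever some tight set `D` contains `e` and all other elements of `D` are already in
the closure. -/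
inductive Expressible {α : Type*} (tight : Set (Finset α)) (Q : Set α) : α → Prop
  | base {e : α} : e ∈ Q → Expressible tight Q e
  | step (D : Finset α) (e : α) : D ∈ tight → e ∈ D →
      (∀ f ∈ D, f ≠ e → Expressible tight Q f) → Expressible tight Q e

namespace Stmt9Aux

def vtx (k i : ℕ) : Fin (2 * k + 3) :=
  ⟨i % (2 * k + 1), by have := Nat.mod_lt i (y := 2 * k + 1) (by omega); omega⟩

lemma vtx_val (k i : ℕ) : (vtx k i).val = i % (2 * k + 1) := rfl

lemma vtx_eq_iff {k i j : ℕ} (hij : i ≤ j) : vtx k i = vtx k j ↔ (2 * k + 1) ∣ (j - i) := by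
  rw [← Nat.modEq_iff_dvd' hij, Fin.ext_iff]
  exact Iff.rfl

lemma vtx_ne {k i j : ℕ} (hij : i < j) (h : j - i < 2 * k + 1) : vtx k i ≠ vtx k j := by
  intro h'
  have hd := (vtx_eq_iff (Nat.le_of_lt hij)).1 h'
  have := Nat.le_of_dvd (by omega) hd
  omega

lemma vtx_add_period (k a : ℕ) : vtx k (a + (2 * k + 1)) = vtx k a :=
  ((vtx_eq_iff (by omega)).2 ⟨1, by omega⟩).symm

def arc (k a : ℕ) (hk : 1 ≤ k) :
    (m : ℕ) → (⊤ : SimpleGraph (Fin (2 * k + 3))).Walk (vtx k a) (vtx k (a + m))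
  | 0 => Walk.nil
  | m + 1 =>
    Walk.cons ((top_adj _ _).2 (vtx_ne (by omega) (by omega)))
      ((arc k (a + 1) hk m).copy rfl (by congr 1; omega))

lemma arc_support (k a : ℕ) (hk : 1 ≤ k) (m : ℕ) :
    (arc k a hk m).support = (List.range (m + 1)).map (fun i => vtx k (a + i)) := by
  induction m generalizing a with
  | zero =>
    show [vtx k a] = _
    simp [List.range_succ]
  | succ m ih =>
    rw [arc, Walk.support_cons, Walk.support_copy, ih, @List.range_succ_eq_map (m + 1)]
    simp only [List.map_cons, List.map_map]
    congr 1
    refine List.map_congr_left fun i _ => ?_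
    simp only [Function.comp_apply]
    exact congrArg (vtx k) (by omega)

lemma arc_edges (k a : ℕ) (hk : 1 ≤ k) (m : ℕ) :
    (arc k a hk m).edges = (List.range m).map (fun i => s(vtx k (a + i), vtx k (a + i + 1))) := by
  induction m generalizing a with
  | zero =>
    show [] = _
    simp
  | succ m ih =>
    rw [arc, Walk.edges_cons, Walk.edges_copy, ih, @List.range_succ_eq_map m]
    simp only [List.map_cons, List.map_map]
    congr 1
    refine List.map_congr_left fun i _ => ?_
    have h1 : a + 1 + i = a + Nat.succ i := by omega
    simp only [Function.comp_apply]
    rw [h1]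

lemma arc_length (k a : ℕ) (hk : 1 ≤ k) (m : ℕ) : (arc k a hk m).length = m := by
  rw [← Walk.length_edges, arc_edges]; simp

lemma arc_support_nodup (k a : ℕ) (hk : 1 ≤ k) (m : ℕ) (hm : m ≤ 2 * k) :
    (arc k a hk m).support.Nodup := by
  rw [arc_support]
  refine List.Nodup.map_on ?_ List.nodup_range
  intro i hi j hj hij
  rw [List.mem_range] at hi hj
  by_contra hne
  rcases Nat.lt_or_ge i j with h | h
  · have hd := (vtx_eq_iff (k := k) (by omega : a + i ≤ a + j)).1 hij
    have := Nat.le_of_dvd (by omega) hd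
    omega
  · have h' : j < i := by omega
    have hd := (vtx_eq_iff (k := k) (by omega : a + j ≤ a + i)).1 hij.symm
    have := Nat.le_of_dvd (by omega) hd
    omega

lemma cCoeff_mk (k : ℕ) (x y : Fin (2 * k + 3)) :
    cCoeff k s(x, y) = cCoeffFun k x.val y.val := rfl

lemma succ_mod (n x : ℕ) (hn : 2 ≤ n) :
    (x + 1) % n = if x % n = n - 1 then 0 else x % n + 1 := by
  have hx : x % n < n := Nat.mod_lt _ (by omega)
  rw [Nat.add_mod, Nat.mod_eq_of_lt (show 1 < n by omega)]
  split_ifs with h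
  · rw [h, show n - 1 + 1 = n by omega, Nat.mod_self]
  · exact Nat.mod_eq_of_lt (by omega)

lemma cCoeff_consec (k x : ℕ) (hk : 1 ≤ k) :
    cCoeff k s(vtx k x, vtx k (x + 1)) = 1 := by
  rw [cCoeff_mk, vtx_val, vtx_val, succ_mod _ _ (by omega)]
  have hx : x % (2 * k + 1) < 2 * k + 1 := Nat.mod_lt _ (by omega)
  unfold cCoeffFun ellLen
  split_ifs <;> omega

lemma cCoeff_chord (k a m : ℕ) (h2 : 2 ≤ m) (hm : m ≤ 2 * k) (hme : m % 2 = 0) :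
    cCoeff k s(vtx k (a + m), vtx k a) = 2 * k + 1 - m := by
  rw [cCoeff_mk, vtx_val, vtx_val]
  have hr : a % (2 * k + 1) < 2 * k + 1 := Nat.mod_lt _ (by omega)
  have key : (a + m) % (2 * k + 1) = (a % (2 * k + 1) + m) % (2 * k + 1) := by
    rw [Nat.add_mod, Nat.mod_eq_of_lt (show m < 2 * k + 1 by omega)]
  rcases Nat.lt_or_ge (a % (2 * k + 1) + m) (2 * k + 1) with h | h
  · rw [key, Nat.mod_eq_of_lt h]
    unfold cCoeffFun ellLen
    split_ifs <;> omega
  · have h1 : (a % (2 * k + 1) + m) % (2 * k + 1)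
        = a % (2 * k + 1) + m - (2 * k + 1) := by
      rw [Nat.mod_eq_sub_mod h, Nat.mod_eq_of_lt (by omega)]
    rw [key, h1]
    unfold cCoeffFun ellLen
    split_ifs <;> omega

def TS (k : ℕ) : Set (Finset (Sym2 (Fin (2 * k + 3)))) :=
  {F | ∃ (u : Fin (2 * k + 3)) (p : (⊤ : SimpleGraph (Fin (2 * k + 3))).Walk u u),
    p.IsCycle ∧ Odd p.length ∧ (p.edges.map (cCoeff k)).sum = 2 * k + 1 ∧
    F = p.edges.toFinset}

def QS (k : ℕ) : Set (Sym2 (Fin (2 * k + 3))) :=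
  {e' : Sym2 (Fin (2 * k + 3)) | ¬e'.IsDiag ∧ (⟨2 * k + 1, Nat.add_lt_add_left (by decide : 1 < 3) (2 * k)⟩ : Fin (2 * k + 3)) ∈ e'}

def sV (k : ℕ) : Fin (2 * k + 3) := ⟨2 * k + 1, Nat.add_lt_add_left (by decide : 1 < 3) (2 * k)⟩
def tV (k : ℕ) : Fin (2 * k + 3) := ⟨2 * k + 2, by omega⟩

abbrev Ex (k : ℕ) (e : Sym2 (Fin (2 * k + 3))) : Prop := Expressible (TS k) (QS k) e

lemma ex_base {k : ℕ} {e : Sym2 (Fin (2 * k + 3))} (hd : ¬e.IsDiag) (hs : sV k ∈ e) :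
    Ex k e := Expressible.base ⟨hd, hs⟩

lemma ex_tri (k : ℕ) (x y z : Fin (2 * k + 3)) (hxy : x ≠ y) (hyz : y ≠ z) (hzx : z ≠ x)
    (hxz : x ≠ z)
    (hsum : cCoeff k s(x, y) + cCoeff k s(y, z) + cCoeff k s(z, x) = 2 * k + 1)
    (h1 : Ex k s(x, y)) (h2 : Ex k s(y, z)) : Ex k s(z, x) := by
  refine Expressible.step {s(x, y), s(y, z), s(z, x)} s(z, x) ?_ (by simp) ?_
  · refine ⟨x, Walk.cons ((top_adj _ _).2 hxy) (Walk.cons ((top_adj _ _).2 hyz)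
      (Walk.cons ((top_adj _ _).2 hzx) Walk.nil)), ?_, ?_, ?_, ?_⟩
    · rw [Walk.cons_isCycle_iff]
      constructor
      · apply Walk.IsPath.mk'
        simp [hyz, hzx, hxy.symm]
      · simp only [Walk.edges_cons, Walk.edges_nil, List.mem_cons, List.not_mem_nil,
          or_false, Sym2.eq_iff]
        rintro ((⟨h, -⟩ | ⟨h, -⟩) | (⟨h, -⟩ | ⟨-, h⟩))
        · exact hxy h
        · exact hxz h
        · exact hxz h
        · exact hyz h
    · simp only [Walk.length_cons, Walk.length_nil]
      decide
    · simp only [Walk.edges_cons, Walk.edges_nil, List.map_cons, List.map_nil,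
        List.sum_cons, List.sum_nil]
      linarith [hsum]
    · simp
  · intro f hf hne
    simp only [Finset.mem_insert, Finset.mem_singleton] at hf
    rcases hf with rfl | rfl | rfl
    · exact h1
    · exact h2
    · exact absurd rfl hne

lemma cCoeff_s_left (k : ℕ) (w : Fin (2 * k + 3)) (hw : w.val < 2 * k + 1) :
    cCoeff k s(sV k, w) = k := by
  rw [cCoeff_mk]
  show cCoeffFun k (2 * k + 1) w.val = k
  unfold cCoeffFun ellLen
  split_ifs <;> omega

lemma cCoeff_s_right (k : ℕ) (w : Fin (2 * k + 3)) (hw : w.val < 2 * k + 1) :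
    cCoeff k s(w, sV k) = k := by
  rw [Sym2.eq_swap]; exact cCoeff_s_left k w hw

lemma cCoeff_t (k : ℕ) (w : Fin (2 * k + 3)) (hw : w.val < 2 * k + 1) :
    cCoeff k s(tV k, w) = k := by
  rw [cCoeff_mk]
  show cCoeffFun k (2 * k + 2) w.val = k
  unfold cCoeffFun ellLen
  split_ifs <;> omega

lemma cCoeff_st (k : ℕ) : cCoeff k s(sV k, tV k) = 1 := by
  rw [cCoeff_mk]
  show cCoeffFun k (2 * k + 1) (2 * k + 2) = 1
  unfold cCoeffFun ellLen
  split_ifs <;> omega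

lemma vtx_lt (k i : ℕ) : (vtx k i).val < 2 * k + 1 := Nat.mod_lt _ (by omega)

lemma sV_ne_vtx (k i : ℕ) : sV k ≠ vtx k i := by
  intro h
  have h' : 2 * k + 1 = (vtx k i).val := congrArg Fin.val h
  have := vtx_lt k i
  omega

lemma exC (k : ℕ) (hk : 1 ≤ k) (x : ℕ) : Ex k s(vtx k x, vtx k (x + 1)) := by
  refine ex_tri k (vtx k (x + 1)) (sV k) (vtx k x) (sV_ne_vtx k (x + 1)).symm
    (sV_ne_vtx k x) (vtx_ne (by omega) (by omega)) ?_ ?_ ?_ ?_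
  · intro h
    have hd := (vtx_eq_iff (k := k) (by omega : x ≤ x + 1)).1 h.symm
    have := Nat.le_of_dvd (by omega) hd
    omega
  · rw [cCoeff_s_right k _ (vtx_lt k (x + 1)), cCoeff_s_left k _ (vtx_lt k x),
      cCoeff_consec k x hk]
    omega
  · exact ex_base (by rw [Sym2.mk_isDiag_iff]; exact (sV_ne_vtx k (x + 1)).symm)
      (by rw [Sym2.mem_iff]; right; rfl)
  · exact ex_base (by rw [Sym2.mk_isDiag_iff]; exact sV_ne_vtx k x)
      (by rw [Sym2.mem_iff]; left; rfl)

lemma ex_chordD (k a m : ℕ) (hk : 1 ≤ k) (h2 : 2 ≤ m) (hm : m ≤ 2 * k) (hme : m % 2 = 0) :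
    Ex k s(vtx k (a + m), vtx k a) := by
  have hC := exC k hk
  have hne : vtx k (a + m) ≠ vtx k a := (vtx_ne (show a < a + m by omega) (by omega)).symm
  set p : (⊤ : SimpleGraph (Fin (2 * k + 3))).Walk (vtx k (a + m)) (vtx k (a + m)) :=
    Walk.cons ((top_adj _ _).2 hne) (arc k a hk m) with hp
  have hedges : p.edges
      = s(vtx k (a + m), vtx k a)
        :: (List.range m).map (fun i => s(vtx k (a + i), vtx k (a + i + 1))) := by
    rw [hp, Walk.edges_cons, arc_edges]
  refine Expressible.step p.edges.toFinset _ ⟨vtx k (a + m), p, ?_, ?_, ?_, rfl⟩ ?_ ?_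
  · rw [hp, Walk.cons_isCycle_iff]
    refine ⟨Walk.IsPath.mk' (arc_support_nodup k a hk m hm), ?_⟩
    rw [arc_edges]
    intro hmem
    obtain ⟨i, hi, heq⟩ := List.mem_map.1 hmem
    rw [List.mem_range] at hi
    rcases Sym2.eq_iff.1 heq with ⟨h1', h2'⟩ | ⟨h1', h2'⟩
    · have hd := (vtx_eq_iff (k := k) (show a ≤ a + i + 1 by omega)).1 h2'.symm
      have := Nat.le_of_dvd (by omega) hd
      omega
    · have hd := (vtx_eq_iff (k := k) (show a ≤ a + i by omega)).1 h1'.symm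
      have hi0 : i = 0 := by
        rcases Nat.eq_zero_or_pos i with h | h
        · exact h
        · have := Nat.le_of_dvd (by omega) hd
          omega
      subst hi0
      have hd2 := (vtx_eq_iff (k := k) (show a + 0 + 1 ≤ a + m by omega)).1 h2'
      have := Nat.le_of_dvd (by omega) hd2
      omega
  · rw [hp, Walk.length_cons, arc_length]
    exact ⟨m / 2, by omega⟩
  · rw [hedges]
    simp only [List.map_cons, List.sum_cons, List.map_map]
    rw [cCoeff_chord k a m h2 hm hme]
    have hone : ∀ i ∈ List.range m,
        ((cCoeff k) ∘ fun i => s(vtx k (a + i), vtx k (a + i + 1))) i = (fun _ => 1) i :=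
      fun i _ => cCoeff_consec k (a + i) hk
    rw [List.map_congr_left hone]
    have hsum1 : ((List.range m).map (fun _ => (1 : ℕ))).sum = m := by simp
    rw [hsum1]
    omega
  · rw [List.mem_toFinset, hedges]
    exact List.mem_cons_self
  · intro f hf hne'
    rw [List.mem_toFinset, hedges, List.mem_cons] at hf
    rcases hf with rfl | h
    · exact absurd rfl hne'
    · obtain ⟨i, -, rfl⟩ := List.mem_map.1 h
      exact hC (a + i)

lemma ex_chord (k : ℕ) (hk : 1 ≤ k) (a b : ℕ) (hab : a < b) (hb : b < 2 * k + 1) :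
    Ex k s(vtx k a, vtx k b) := by
  by_cases hd : (b - a) % 2 = 0
  · have h := ex_chordD k a (b - a) hk (by omega) (by omega) hd
    rw [show a + (b - a) = b by omega] at h
    rw [Sym2.eq_swap]
    exact h
  · have h := ex_chordD k b (2 * k + 1 - (b - a)) hk (by omega) (by omega) (by omega)
    rw [show b + (2 * k + 1 - (b - a)) = a + (2 * k + 1) by omega, vtx_add_period] at h
    exact h

lemma ex_t (k : ℕ) (hk : 1 ≤ k) (w : Fin (2 * k + 3)) (hw : w.val < 2 * k + 1) :
    Ex k s(tV k, w) := by
  have h1 : w ≠ sV k := by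
    intro h
    have h' : w.val = 2 * k + 1 := congrArg Fin.val h
    omega
  refine ex_tri k w (sV k) (tV k) h1 ?_ ?_ ?_ ?_ ?_ ?_
  · intro h
    have h' : (2 * k + 1 : ℕ) = 2 * k + 2 := congrArg Fin.val h
    omega
  · intro h
    have h' : (2 * k + 2 : ℕ) = w.val := congrArg Fin.val h
    omega
  · intro h
    have h' : w.val = 2 * k + 2 := congrArg Fin.val h
    omega
  · rw [cCoeff_s_right k w hw, cCoeff_st k, cCoeff_t k w hw]
    omega
  · exact ex_base (by rw [Sym2.mk_isDiag_iff]; exact h1) (by rw [Sym2.mem_iff]; right; rfl)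
  · exact ex_base
      (by rw [Sym2.mk_isDiag_iff]
          intro h
          have h' : (sV k).val = (tV k).val := congrArg Fin.val h
          have hs : (sV k).val = 2 * k + 1 := rfl
          have ht : (tV k).val = 2 * k + 2 := rfl
          omega)
      (by rw [Sym2.mem_iff]; left; rfl)

end Stmt9Aux

open Stmt9Aux

/-- For `G = K_{2k+3}` with cycle `C` on vertices `0,…,2k` and remaining vertices
`s = 2k+1`, `t = 2k+2`, every edge of `G` is `Q`-expressible for `Q = δ(s)` with
respect to the odd cycles tight for the `C`-induced constraint. -/
theorem stmt_9 (k : ℕ) (hk : 1 ≤ k) (e : Sym2 (Fin (2 * k + 3))) (he : ¬e.IsDiag) :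
    Expressible
      {F | ∃ (u : Fin (2 * k + 3)) (p : (⊤ : SimpleGraph (Fin (2 * k + 3))).Walk u u),
        p.IsCycle ∧ Odd p.length ∧ (p.edges.map (cCoeff k)).sum = 2 * k + 1 ∧
        F = p.edges.toFinset}
      {e' : Sym2 (Fin (2 * k + 3)) | ¬e'.IsDiag ∧ (⟨2 * k + 1, by omega⟩ : Fin (2 * k + 3)) ∈ e'}
      e := by
  induction e using Sym2.ind with
  | _ x y =>
  rw [Sym2.mk_isDiag_iff] at he
  show Ex k s(x, y)
  have hxy : x ≠ y := he
  by_cases hxs : x.val = 2 * k + 1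
  · exact ex_base (by rw [Sym2.mk_isDiag_iff]; exact hxy)
      (by rw [Sym2.mem_iff]; left; exact (Fin.ext hxs).symm)
  by_cases hys : y.val = 2 * k + 1
  · exact ex_base (by rw [Sym2.mk_isDiag_iff]; exact hxy)
      (by rw [Sym2.mem_iff]; right; exact (Fin.ext hys).symm)
  by_cases hxt : x.val = 2 * k + 2
  · have hy2 : y.val ≠ 2 * k + 2 := fun h => hxy (Fin.ext (by omega))
    have hy : y.val < 2 * k + 1 := by have := y.isLt; omega
    have hx : x = tV k := Fin.ext hxt
    rw [hx]
    exact ex_t k hk y hy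
  by_cases hyt : y.val = 2 * k + 2
  · have hx : x.val < 2 * k + 1 := by have := x.isLt; omega
    have hy : y = tV k := Fin.ext hyt
    rw [hy, Sym2.eq_swap]
    exact ex_t k hk x hx
  · have hx : x.val < 2 * k + 1 := by have := x.isLt; omega
    have hy : y.val < 2 * k + 1 := by have := y.isLt; omega
    have hvne : x.val ≠ y.val := fun h => hxy (Fin.ext h)
    have hxv : x = vtx k x.val := Fin.ext (by rw [vtx_val, Nat.mod_eq_of_lt hx])
    have hyv : y = vtx k y.val := Fin.ext (by rw [vtx_val, Nat.mod_eq_of_lt hy])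
    rcases Nat.lt_or_ge x.val y.val with h | h
    · rw [hxv, hyv]
      exact ex_chord k hk _ _ h hy
    · have h' : y.val < x.val := by omega
      rw [Sym2.eq_swap, hxv, hyv]
      exact ex_chord k hk y.val x.val h' hx
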